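/- Let n ≥ 2 and let λ₁,…,λ_g ∈ F_n satisfy ∏_{i=1}^g [y_i, λ_i] ∈ F_{n+2}. Define the endomorphism h of F by h(x_i) = x_i·λ_i and h(y_i) = λ_i⁻¹·y_i·λ_i for 1 ≤ i ≤ g. Then ∏_{i=1}^g [h(x_i), h(y_i)] ≡ ω_g modulo F_{n+2}; consequently h induces an automorphism of F/F_{n+1} which belongs to A₀(F/F_{n+1}) and which induces the identity automorphism of F/F_n. -/

import Mathlib

/-!
`Fg g` is the free group `F` on `2g` generators `x₁,…,x_g,y₁,…,y_g`
(`X g i = x_i`, `Y g i = y_i`), `omegaG g = [x₁,y₁]⋯[x_g,y_g]`.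
Paper convention: `F_k = (⊤ : Subgroup (Fg g)).lowerCentralSeries (k-1)`, and
`Q g k = F/F_k`.  `IsA0 g k φ` says that the automorphism `φ` of `F/F_k`
lies in `A₀(F/F_k)`: some endomorphism of `F` lifting `φ` sends `ω_g`
into `ω_g·F_{k+1}`.
-/

open scoped commutatorElement

abbrev Fg (g : ℕ) := FreeGroup (Fin g × Bool)

def X (g : ℕ) (i : Fin g) : Fg g := FreeGroup.of (i, false)

def Y (g : ℕ) (i : Fin g) : Fg g := FreeGroup.of (i, true)

def omegaG (g : ℕ) : Fg g := ((List.finRange g).map fun i => ⁅X g i, Y g i⁆).prod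

/-- `F/F_k` in the paper's indexing of the lower central series. -/
abbrev Q (g k : ℕ) := Fg g ⧸ (⊤ : Subgroup (Fg g)).lowerCentralSeries (k - 1)

def mkQ (g k : ℕ) : Fg g →* Q g k := QuotientGroup.mk' _

/-- Membership in `A₀(F/F_k)`. -/
def IsA0 (g k : ℕ) (φ : MulAut (Q g k)) : Prop :=
  ∃ h : Fg g →* Fg g,
    (∀ a : Fg g, mkQ g k (h a) = φ (mkQ g k a)) ∧
    (omegaG g)⁻¹ * h (omegaG g) ∈ (⊤ : Subgroup (Fg g)).lowerCentralSeries k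

/-- The natural projection `F/F_{k+1} → F/F_k`. -/
def projQ (g k : ℕ) : Q g (k + 1) →* Q g k :=
  QuotientGroup.map _ _ (MonoidHom.id _)
    (fun x hx => Subgroup.lowerCentralSeries_antitone (S := ⊤) (Nat.sub_le k 1) hx)

lemma lcs_comm (G : Type*) [Group G] :
    ∀ b a : ℕ, ⁅(⊤ : Subgroup G).lowerCentralSeries a, (⊤ : Subgroup G).lowerCentralSeries b⁆ ≤ (⊤ : Subgroup G).lowerCentralSeries (a + b + 1) := by
  intro b
  induction b with
  | zero =>
    intro a
    rw [Subgroup.lowerCentralSeries_zero]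
    exact le_of_eq (show ⁅(⊤ : Subgroup G).lowerCentralSeries a, (⊤ : Subgroup G)⁆ = (⊤ : Subgroup G).lowerCentralSeries (a + 0 + 1) from rfl)
  | succ b ih =>
    intro a
    have hbot : ∀ m : ℕ, a + (b + 1) + 1 ≤ m →
        Subgroup.map (QuotientGroup.mk' ((⊤ : Subgroup G).lowerCentralSeries (a + (b + 1) + 1)))
          ((⊤ : Subgroup G).lowerCentralSeries m) = ⊥ := by
      intro m hm
      rw [Subgroup.map_eq_bot_iff, QuotientGroup.ker_mk']
      exact Subgroup.lowerCentralSeries_antitone (S := ⊤) hm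
    set N := (⊤ : Subgroup G).lowerCentralSeries (a + (b + 1) + 1) with hN
    have hπ : Function.Surjective (QuotientGroup.mk' N) := QuotientGroup.mk'_surjective N
    have h1 : ⁅⁅(⊤ : Subgroup (G ⧸ N)), Subgroup.map (QuotientGroup.mk' N) ((⊤ : Subgroup G).lowerCentralSeries a)⁆,
        Subgroup.map (QuotientGroup.mk' N) ((⊤ : Subgroup G).lowerCentralSeries b)⁆ = ⊥ := by
      rw [Subgroup.commutator_comm ⊤, ← Subgroup.map_top_of_surjective _ hπ,
        ← Subgroup.map_commutator, ← Subgroup.map_commutator]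
      refine le_bot_iff.mp ?_
      calc Subgroup.map (QuotientGroup.mk' N) ⁅⁅(⊤ : Subgroup G).lowerCentralSeries a, ⊤⁆, (⊤ : Subgroup G).lowerCentralSeries b⁆
          ≤ Subgroup.map (QuotientGroup.mk' N) ((⊤ : Subgroup G).lowerCentralSeries ((a + 1) + b + 1)) :=
            Subgroup.map_mono (ih (a + 1))
        _ = ⊥ := hbot _ (by omega)
    have h2 : ⁅⁅Subgroup.map (QuotientGroup.mk' N) ((⊤ : Subgroup G).lowerCentralSeries a),
        Subgroup.map (QuotientGroup.mk' N) ((⊤ : Subgroup G).lowerCentralSeries b)⁆, (⊤ : Subgroup (G ⧸ N))⁆ = ⊥ := by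
      rw [← Subgroup.map_top_of_surjective _ hπ, ← Subgroup.map_commutator, ← Subgroup.map_commutator]
      refine le_bot_iff.mp ?_
      calc Subgroup.map (QuotientGroup.mk' N) ⁅⁅(⊤ : Subgroup G).lowerCentralSeries a, (⊤ : Subgroup G).lowerCentralSeries b⁆, ⊤⁆
          ≤ Subgroup.map (QuotientGroup.mk' N) ⁅(⊤ : Subgroup G).lowerCentralSeries (a + b + 1), ⊤⁆ :=
            Subgroup.map_mono (Subgroup.commutator_mono (ih a) le_rfl)
        _ = Subgroup.map (QuotientGroup.mk' N) ((⊤ : Subgroup G).lowerCentralSeries (a + b + 1 + 1)) := rfl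
        _ = ⊥ := hbot _ (by omega)
    have h3 := Subgroup.commutator_commutator_eq_bot_of_rotate h1 h2
    rw [← QuotientGroup.ker_mk' N, ← Subgroup.map_eq_bot_iff, Subgroup.map_commutator,
      show (⊤ : Subgroup G).lowerCentralSeries (b + 1) = ⁅(⊤ : Subgroup G).lowerCentralSeries b, ⊤⁆ from rfl,
      Subgroup.map_commutator, Subgroup.map_top_of_surjective _ hπ, Subgroup.commutator_comm]
    exact h3

lemma mk_mem_center {G : Type*} [Group G] (m : ℕ) {u : G} (hu : u ∈ (⊤ : Subgroup G).lowerCentralSeries m) :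
    (QuotientGroup.mk' ((⊤ : Subgroup G).lowerCentralSeries (m + 1))) u ∈
      Subgroup.center (G ⧸ (⊤ : Subgroup G).lowerCentralSeries (m + 1)) := by
  rw [Subgroup.mem_center_iff]
  intro q
  obtain ⟨a, rfl⟩ := QuotientGroup.mk'_surjective _ q
  rw [← map_mul, ← map_mul]
  refine (QuotientGroup.mk'_eq_mk' _).mpr ⟨⁅u⁻¹, a⁻¹⁆, ?_, ?_⟩
  · show ⁅u⁻¹, a⁻¹⁆ ∈ ⁅(⊤ : Subgroup G).lowerCentralSeries m, (⊤ : Subgroup G)⁆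
    exact Subgroup.commutator_mem_commutator (inv_mem hu) (Subgroup.mem_top _)
  · rw [commutatorElement_def]; group

lemma comm_aux1 {G : Type*} [Group G] {z : G} (hz : ∀ x, z * x = x * z) (a b : G) :
    ⁅a * z, b⁆ = ⁅a, b⁆ := by
  have h1 : ⁅a * z, b⁆ = a * (z * b) * z⁻¹ * a⁻¹ * b⁻¹ := by
    rw [commutatorElement_def]; group
  have h2 : a * (b * z) * z⁻¹ * a⁻¹ * b⁻¹ = ⁅a, b⁆ := by
    rw [commutatorElement_def]; group
  rw [h1, hz b, h2]

lemma comm_aux2 {G : Type*} [Group G] {a v : G} (hav : a * v = v * a) (b : G) :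
    ⁅a, b * v⁆ = ⁅a, b⁆ := by
  have hva : v * a⁻¹ = a⁻¹ * v := ((show Commute a v from hav).inv_left.eq).symm
  have h1 : ⁅a, b * v⁆ = a * b * (v * a⁻¹) * v⁻¹ * b⁻¹ := by
    rw [commutatorElement_def]; group
  have h2 : a * b * (a⁻¹ * v) * v⁻¹ * b⁻¹ = ⁅a, b⁆ := by
    rw [commutatorElement_def]; group
  rw [h1, hva, h2]

lemma key_lemma {G : Type*} [Group G] (f : G →* G) (c : ℕ)
    (hf : ∀ a : G, a⁻¹ * f a ∈ (⊤ : Subgroup G).lowerCentralSeries c) :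
    ∀ k : ℕ, ∀ u ∈ (⊤ : Subgroup G).lowerCentralSeries k, u⁻¹ * f u ∈ (⊤ : Subgroup G).lowerCentralSeries (k + c) := by
  intro k
  induction k with
  | zero => intro u _; simpa using hf u
  | succ k ih =>
    intro u hu
    rw [Subgroup.lowerCentralSeries_succ] at hu
    refine Subgroup.closure_induction ?_ ?_ ?_ ?_ hu
    · rintro x ⟨p, hp, q, -, rfl⟩
      have hidx : k + 1 + c = k + c + 1 := by omega
      rw [hidx]
      have hu0 : p⁻¹ * f p ∈ (⊤ : Subgroup G).lowerCentralSeries (k + c) := ih p hp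
      have hv : q⁻¹ * f q ∈ (⊤ : Subgroup G).lowerCentralSeries c := hf q
      have hz : ∀ x, (QuotientGroup.mk' ((⊤ : Subgroup G).lowerCentralSeries (k + c + 1))) (p⁻¹ * f p) * x
          = x * (QuotientGroup.mk' ((⊤ : Subgroup G).lowerCentralSeries (k + c + 1))) (p⁻¹ * f p) :=
        fun x => ((Subgroup.mem_center_iff.mp (mk_mem_center _ hu0)) x).symm
      have hpv : ⁅p, q⁻¹ * f q⁆ ∈ (⊤ : Subgroup G).lowerCentralSeries (k + c + 1) :=
        lcs_comm G c k (Subgroup.commutator_mem_commutator hp hv)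
      have hcomm : (QuotientGroup.mk' ((⊤ : Subgroup G).lowerCentralSeries (k + c + 1))) p *
            (QuotientGroup.mk' ((⊤ : Subgroup G).lowerCentralSeries (k + c + 1))) (q⁻¹ * f q)
          = (QuotientGroup.mk' ((⊤ : Subgroup G).lowerCentralSeries (k + c + 1))) (q⁻¹ * f q) *
            (QuotientGroup.mk' ((⊤ : Subgroup G).lowerCentralSeries (k + c + 1))) p := by
        rw [← commutatorElement_eq_one_iff_mul_comm, ← map_commutatorElement]
        exact (QuotientGroup.eq_one_iff _).mpr hpv
      have hfc : f (p * q * p⁻¹ * q⁻¹) = ⁅p * (p⁻¹ * f p), q * (q⁻¹ * f q)⁆ := by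
        rw [commutatorElement_def]
        simp only [map_mul, map_inv]
        group
      refine (QuotientGroup.eq (s := (⊤ : Subgroup G).lowerCentralSeries (k + c + 1))).mp ?_
      rw [commutatorElement_def p q, hfc]
      show (QuotientGroup.mk' ((⊤ : Subgroup G).lowerCentralSeries (k + c + 1))) (p * q * p⁻¹ * q⁻¹)
        = (QuotientGroup.mk' ((⊤ : Subgroup G).lowerCentralSeries (k + c + 1))) ⁅p * (p⁻¹ * f p), q * (q⁻¹ * f q)⁆
      rw [show p * q * p⁻¹ * q⁻¹ = ⁅p, q⁆ from (commutatorElement_def p q).symm,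
        map_commutatorElement, map_commutatorElement,
        map_mul (QuotientGroup.mk' _) p (p⁻¹ * f p),
        map_mul (QuotientGroup.mk' _) q (q⁻¹ * f q),
        comm_aux1 hz, comm_aux2 hcomm]
    · simpa using Subgroup.one_mem _
    · intro a b _ _ ha hb
      have he : (a * b)⁻¹ * f (a * b) = (b⁻¹ * (a⁻¹ * f a) * b⁻¹⁻¹) * (b⁻¹ * f b) := by
        rw [map_mul]; group
      rw [he]
      exact mul_mem (Subgroup.Normal.conj_mem inferInstance _ ha b⁻¹) hb
    · intro a _ ha
      have he : (a⁻¹)⁻¹ * f a⁻¹ = a * (a⁻¹ * f a)⁻¹ * a⁻¹ := by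
        rw [map_inv]; group
      rw [he]
      exact Subgroup.Normal.conj_mem inferInstance _ (inv_mem ha) a

lemma prod_mul_central {G : Type*} [Group G] {α : Type*} (f c : α → G)
    (hc : ∀ a, c a ∈ Subgroup.center G) :
    ∀ l : List α, (l.map fun i => f i * c i).prod = (l.map f).prod * (l.map c).prod := by
  intro l
  induction l with
  | nil => simp
  | cons a l ih =>
    simp only [List.map_cons, List.prod_cons, ih]
    have h1 := Subgroup.mem_center_iff.mp (hc a)
    have h2 : c a * ((l.map f).prod * (l.map c).prod)
        = (l.map f).prod * (c a * (l.map c).prod) := by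
      rw [← mul_assoc, ← h1 ((l.map f).prod), mul_assoc]
    rw [mul_assoc, h2, mul_assoc]

lemma prod_inv_central {G : Type*} [Group G] {α : Type*} (c : α → G)
    (hc : ∀ a, c a ∈ Subgroup.center G) :
    ∀ l : List α, (l.map fun i => (c i)⁻¹).prod = ((l.map c).prod)⁻¹ := by
  intro l
  induction l with
  | nil => simp
  | cons a l ih =>
    simp only [List.map_cons, List.prod_cons, ih, mul_inv_rev]
    exact (Subgroup.mem_center_iff.mp (inv_mem (hc a)) ((l.map c).prod)⁻¹).symm


/-- if `λ_i ∈ F_n` with `∏_i [y_i,λ_i] ∈ F_{n+2}`, then the endomorphism `h`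
with `h(x_i) = x_i·λ_i`, `h(y_i) = λ_i⁻¹·y_i·λ_i` satisfies
`∏_i [h(x_i),h(y_i)] ≡ ω_g mod F_{n+2}`; consequently `h` induces the identity on `F/F_n`
and induces an automorphism of `F/F_{n+1}` lying in `A₀(F/F_{n+1})`. -/
theorem realization_for_massey (g n : ℕ) (hg : 1 ≤ g) (hn : 2 ≤ n)
    (lam : Fin g → Fg g)
    (hlam : ∀ i, lam i ∈ (⊤ : Subgroup (Fg g)).lowerCentralSeries (n - 1))
    (hprod : ((List.finRange g).map fun i => ⁅Y g i, lam i⁆).prod ∈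
      (⊤ : Subgroup (Fg g)).lowerCentralSeries (n + 1))
    (h : Fg g →* Fg g)
    (hx : ∀ i, h (X g i) = X g i * lam i)
    (hy : ∀ i, h (Y g i) = (lam i)⁻¹ * Y g i * lam i) :
    -- `∏_i [h(x_i), h(y_i)] ≡ ω_g` modulo `F_{n+2}`
    (omegaG g)⁻¹ * ((List.finRange g).map fun i => ⁅h (X g i), h (Y g i)⁆).prod ∈
      (⊤ : Subgroup (Fg g)).lowerCentralSeries (n + 1) ∧
    -- `h` induces the identity automorphism of `F/F_n`
    (∀ a : Fg g, a⁻¹ * h a ∈ (⊤ : Subgroup (Fg g)).lowerCentralSeries (n - 1)) ∧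
    -- `h` induces an automorphism of `F/F_{n+1}` belonging to `A₀(F/F_{n+1})`
    ∃ ψ : MulAut (Q g (n + 1)),
      (∀ a : Fg g, ψ (mkQ g (n + 1) a) = mkQ g (n + 1) (h a)) ∧
      IsA0 g (n + 1) ψ := by
  -- Part 2 : h induces the identity on F/F_n
  have hD : ∀ a : Fg g, a⁻¹ * h a ∈ (⊤ : Subgroup (Fg g)).lowerCentralSeries (n - 1) := by
    have heq : (QuotientGroup.mk' ((⊤ : Subgroup (Fg g)).lowerCentralSeries (n - 1))).comp h
        = QuotientGroup.mk' ((⊤ : Subgroup (Fg g)).lowerCentralSeries (n - 1)) := by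
      apply FreeGroup.ext_hom
      rintro ⟨i, b⟩
      cases b
      · show (QuotientGroup.mk' ((⊤ : Subgroup (Fg g)).lowerCentralSeries (n - 1))) (h (X g i))
          = (QuotientGroup.mk' ((⊤ : Subgroup (Fg g)).lowerCentralSeries (n - 1))) (X g i)
        refine (QuotientGroup.mk'_eq_mk' _).mpr ⟨(lam i)⁻¹, inv_mem (hlam i), ?_⟩
        rw [hx i]; group
      · show (QuotientGroup.mk' ((⊤ : Subgroup (Fg g)).lowerCentralSeries (n - 1))) (h (Y g i))
          = (QuotientGroup.mk' ((⊤ : Subgroup (Fg g)).lowerCentralSeries (n - 1))) (Y g i)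
        refine (QuotientGroup.mk'_eq_mk' _).mpr
          ⟨(lam i)⁻¹ * ((Y g i)⁻¹ * lam i * Y g i), mul_mem (inv_mem (hlam i)) ?_, ?_⟩
        · have := Subgroup.Normal.conj_mem
            (inferInstance : ((⊤ : Subgroup (Fg g)).lowerCentralSeries (n - 1)).Normal) _ (hlam i) (Y g i)⁻¹
          simpa using this
        · rw [hy i]; group
    intro a
    have h5 := congrArg (fun k : Fg g →* _ => k a) heq
    simp only [MonoidHom.comp_apply] at h5
    exact (QuotientGroup.eq (s := (⊤ : Subgroup (Fg g)).lowerCentralSeries (n - 1))).mp h5.symm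
  -- membership facts
  have hnn : n - 1 + 1 = n := by omega
  have hmemYlaminv : ∀ i, ⁅Y g i, (lam i)⁻¹⁆ ∈ (⊤ : Subgroup (Fg g)).lowerCentralSeries n := by
    intro i
    have h1 : ⁅(lam i)⁻¹, Y g i⁆ ∈ (⊤ : Subgroup (Fg g)).lowerCentralSeries (n - 1 + 1) :=
      Subgroup.commutator_mem_commutator (inv_mem (hlam i)) (Subgroup.mem_top _)
    rw [hnn] at h1
    rw [show ⁅Y g i, (lam i)⁻¹⁆ = ⁅(lam i)⁻¹, Y g i⁆⁻¹ from (commutatorElement_inv _ _).symm]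
    exact inv_mem h1
  have hmemYlam : ∀ i, ⁅Y g i, lam i⁆ ∈ (⊤ : Subgroup (Fg g)).lowerCentralSeries n := by
    intro i
    have h1 : ⁅lam i, Y g i⁆ ∈ (⊤ : Subgroup (Fg g)).lowerCentralSeries (n - 1 + 1) :=
      Subgroup.commutator_mem_commutator (hlam i) (Subgroup.mem_top _)
    rw [hnn] at h1
    rw [show ⁅Y g i, lam i⁆ = ⁅lam i, Y g i⁆⁻¹ from (commutatorElement_inv _ _).symm]
    exact inv_mem h1
  have hcentral : ∀ i, (QuotientGroup.mk' ((⊤ : Subgroup (Fg g)).lowerCentralSeries (n + 1))) ⁅Y g i, (lam i)⁻¹⁆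
      ∈ Subgroup.center (Fg g ⧸ (⊤ : Subgroup (Fg g)).lowerCentralSeries (n + 1)) :=
    fun i => mk_mem_center n (hmemYlaminv i)
  have hcentral2 : ∀ i, (QuotientGroup.mk' ((⊤ : Subgroup (Fg g)).lowerCentralSeries (n + 1))) ⁅Y g i, lam i⁆
      ∈ Subgroup.center (Fg g ⧸ (⊤ : Subgroup (Fg g)).lowerCentralSeries (n + 1)) :=
    fun i => mk_mem_center n (hmemYlam i)
  have hsplit : ∀ i, ⁅h (X g i), h (Y g i)⁆ = ⁅X g i, Y g i⁆ * ⁅Y g i, (lam i)⁻¹⁆ := by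
    intro i
    rw [hx i, hy i, commutatorElement_def, commutatorElement_def, commutatorElement_def]
    group
  -- Part 1
  have hmk : (QuotientGroup.mk' ((⊤ : Subgroup (Fg g)).lowerCentralSeries (n + 1)))
        (((List.finRange g).map fun i => ⁅h (X g i), h (Y g i)⁆).prod)
      = (QuotientGroup.mk' ((⊤ : Subgroup (Fg g)).lowerCentralSeries (n + 1))) (omegaG g) := by
    rw [map_list_prod, List.map_map]
    have e1 : ((QuotientGroup.mk' ((⊤ : Subgroup (Fg g)).lowerCentralSeries (n + 1))) ∘
          fun i => ⁅h (X g i), h (Y g i)⁆)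
        = fun i => (QuotientGroup.mk' ((⊤ : Subgroup (Fg g)).lowerCentralSeries (n + 1))) ⁅X g i, Y g i⁆ *
            (QuotientGroup.mk' ((⊤ : Subgroup (Fg g)).lowerCentralSeries (n + 1))) ⁅Y g i, (lam i)⁻¹⁆ := by
      funext i
      simp only [Function.comp_apply, hsplit i, map_mul]
    rw [e1, prod_mul_central _ _ hcentral]
    have e2 : ((List.finRange g).map fun i =>
        (QuotientGroup.mk' ((⊤ : Subgroup (Fg g)).lowerCentralSeries (n + 1))) ⁅Y g i, (lam i)⁻¹⁆).prod = 1 := by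
      have e3 : (fun i => (QuotientGroup.mk' ((⊤ : Subgroup (Fg g)).lowerCentralSeries (n + 1))) ⁅Y g i, (lam i)⁻¹⁆)
          = fun i => ((QuotientGroup.mk' ((⊤ : Subgroup (Fg g)).lowerCentralSeries (n + 1))) ⁅Y g i, lam i⁆)⁻¹ := by
        funext i
        have hid : ⁅Y g i, (lam i)⁻¹⁆ = (lam i)⁻¹ * ⁅Y g i, lam i⁆⁻¹ * lam i := by
          rw [commutatorElement_def, commutatorElement_def]; group
        rw [hid, map_mul, map_mul, map_inv, map_inv]
        have hcz := Subgroup.mem_center_iff.mp (inv_mem (hcentral2 i))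
        rw [mul_assoc, ← hcz ((QuotientGroup.mk' ((⊤ : Subgroup (Fg g)).lowerCentralSeries (n + 1))) (lam i)),
          inv_mul_cancel_left]
      rw [e3, prod_inv_central _ hcentral2]
      have e4 : ((List.finRange g).map fun i =>
            (QuotientGroup.mk' ((⊤ : Subgroup (Fg g)).lowerCentralSeries (n + 1))) ⁅Y g i, lam i⁆).prod
          = (QuotientGroup.mk' ((⊤ : Subgroup (Fg g)).lowerCentralSeries (n + 1)))
              (((List.finRange g).map fun i => ⁅Y g i, lam i⁆).prod) := by
        simp only [map_list_prod, List.map_map, Function.comp_def]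
      rw [e4]
      have e5 : (QuotientGroup.mk' ((⊤ : Subgroup (Fg g)).lowerCentralSeries (n + 1)))
          (((List.finRange g).map fun i => ⁅Y g i, lam i⁆).prod) = 1 :=
        (QuotientGroup.eq_one_iff _).mpr hprod
      rw [e5, inv_one]
    rw [e2, mul_one]
    simp only [omegaG, map_list_prod, List.map_map, Function.comp_def]
  have part1 : (omegaG g)⁻¹ * ((List.finRange g).map fun i => ⁅h (X g i), h (Y g i)⁆).prod ∈
      (⊤ : Subgroup (Fg g)).lowerCentralSeries (n + 1) :=
    (QuotientGroup.eq (s := (⊤ : Subgroup (Fg g)).lowerCentralSeries (n + 1))).mp hmk.symm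
  have homega : h (omegaG g) = ((List.finRange g).map fun i => ⁅h (X g i), h (Y g i)⁆).prod := by
    simp only [omegaG, map_list_prod, List.map_map, Function.comp_def, map_commutatorElement]
  have part1' : (omegaG g)⁻¹ * h (omegaG g) ∈ (⊤ : Subgroup (Fg g)).lowerCentralSeries (n + 1) := by
    rw [homega]; exact part1
  -- Part 3
  have hle : (⊤ : Subgroup (Fg g)).lowerCentralSeries (n + 1 - 1) ≤
      Subgroup.comap h ((⊤ : Subgroup (Fg g)).lowerCentralSeries (n + 1 - 1)) := by
    intro x hxm
    exact Subgroup.lowerCentralSeries.map h (n + 1 - 1) (Subgroup.mem_map_of_mem h hxm)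
  set φ : Q g (n + 1) →* Q g (n + 1) := QuotientGroup.map _ _ h hle with hφdef
  have hφ : ∀ a : Fg g, φ (mkQ g (n + 1) a) = mkQ g (n + 1) (h a) := by
    intro a
    rw [hφdef]
    exact QuotientGroup.map_mk' ((⊤ : Subgroup (Fg g)).lowerCentralSeries (n + 1 - 1)) ((⊤ : Subgroup (Fg g)).lowerCentralSeries (n + 1 - 1)) h hle a
  have hfix : ∀ q : Q g (n + 1), φ (q⁻¹ * φ q) = q⁻¹ * φ q := by
    intro q
    obtain ⟨a, rfl⟩ := QuotientGroup.mk'_surjective _ q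
    have hu : a⁻¹ * h a ∈ (⊤ : Subgroup (Fg g)).lowerCentralSeries (n - 1) := hD a
    have hkey : (a⁻¹ * h a)⁻¹ * h (a⁻¹ * h a) ∈ (⊤ : Subgroup (Fg g)).lowerCentralSeries n := by
      have h6 := key_lemma h (n - 1) hD (n - 1) _ hu
      exact Subgroup.lowerCentralSeries_antitone (S := ⊤) (by omega) h6
    have e1 : φ ((QuotientGroup.mk' ((⊤ : Subgroup (Fg g)).lowerCentralSeries (n + 1 - 1))) a)
        = (QuotientGroup.mk' ((⊤ : Subgroup (Fg g)).lowerCentralSeries (n + 1 - 1))) (h a) :=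
      hφ a
    rw [e1, ← map_inv, ← map_mul]
    have e2 : φ ((QuotientGroup.mk' ((⊤ : Subgroup (Fg g)).lowerCentralSeries (n + 1 - 1))) (a⁻¹ * h a))
        = (QuotientGroup.mk' ((⊤ : Subgroup (Fg g)).lowerCentralSeries (n + 1 - 1))) (h (a⁻¹ * h a)) :=
      hφ (a⁻¹ * h a)
    rw [e2]
    refine (QuotientGroup.mk'_eq_mk' _).mpr
      ⟨((a⁻¹ * h a)⁻¹ * h (a⁻¹ * h a))⁻¹, inv_mem ?_, by group⟩
    show _ ∈ (⊤ : Subgroup (Fg g)).lowerCentralSeries (n + 1 - 1)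
    simpa only [Nat.add_sub_cancel] using hkey
  have hmain : ∀ q : Q g (n + 1), φ q * (φ (φ q))⁻¹ * φ q = q := by
    intro q
    have h3 := map_mul φ q (q⁻¹ * φ q)
    rw [mul_inv_cancel_left] at h3
    rw [h3, hfix q]
    group
  refine ⟨part1, hD, ?_⟩
  refine ⟨{ toFun := φ, invFun := fun q => q * (φ q)⁻¹ * q,
            left_inv := fun q => hmain q,
            right_inv := ?_, map_mul' := map_mul φ }, ?_, ?_⟩
  · intro q
    show φ (q * (φ q)⁻¹ * q) = q
    rw [map_mul, map_mul, map_inv]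
    exact hmain q
  · intro a
    exact hφ a
  · exact ⟨h, fun a => (hφ a).symm, part1'⟩
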